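/- Suppose u, ρ : ℝ^d × [0,T] → ℝ are C^{2,1}, u satisfies the HJB equation −∂u/∂t + (1/2)‖σ∇u‖² − ⟨∇u, f⟩ − (σ²/2)Δu = F, and ρ satisfies the Fokker-Planck equation ∂ρ/∂t − div(ρ(σ²∇u − f)) − (σ²/2)Δρ = 0. Then Ψ̂(x,t) := ρ(x,t)·exp(u(x,t)) satisfies ∂Ψ̂/∂t = −div(Ψ̂ f) + (σ²/2)ΔΨ̂ − F·Ψ̂. -/

import Mathlib

open MeasureTheory Real Filter
open scoped RealInnerProductSpace BigOperators Topology

abbrev E (d : ℕ) := EuclideanSpace ℝ (Fin d)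

/-- Laplacian: trace of the second derivative. -/
noncomputable def lap {d : ℕ} (p : E d → ℝ) (x : E d) : ℝ :=
  ∑ i, iteratedFDeriv ℝ 2 p x ![EuclideanSpace.single i 1, EuclideanSpace.single i 1]

/-- Divergence of a vector field. -/
noncomputable def dvg {d : ℕ} (v : E d → E d) (x : E d) : ℝ :=
  ∑ i, ⟪fderiv ℝ v x (EuclideanSpace.single i 1), EuclideanSpace.single i (1:ℝ)⟫

-- inner with gradient
lemma inner_grad {d : ℕ} (p : E d → ℝ) (x v : E d) :
    ⟪gradient p x, v⟫ = fderiv ℝ p x v := by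
  rw [gradient, InnerProductSpace.toDual_symm_apply]

lemma grad_inner {d : ℕ} (p : E d → ℝ) (x v : E d) :
    ⟪v, gradient p x⟫ = fderiv ℝ p x v := by
  rw [real_inner_comm, inner_grad]

-- second derivative as nested scalar fderiv
lemma iter2_eq {d : ℕ} {p : E d → ℝ} (hp : ContDiff ℝ 2 p) (x w : E d) :
    iteratedFDeriv ℝ 2 p x ![w, w] = fderiv ℝ (fun y => fderiv ℝ p y w) x w := by
  rw [iteratedFDeriv_two_apply]
  have hd : DifferentiableAt ℝ (fderiv ℝ p) x :=
    ((hp.fderiv_right (m := 1) (by norm_num)).differentiable one_ne_zero).differentiableAt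
  rw [fderiv_clm_apply hd (differentiableAt_const w)]
  simp

lemma decomp {d : ℕ} (a : E d) : a = ∑ i, a i • EuclideanSpace.single i (1:ℝ) := by
  ext j
  rw [WithLp.ofLp_sum, Finset.sum_apply]
  simp [EuclideanSpace.single_apply]

lemma clm_decomp {d : ℕ} (L : E d →L[ℝ] ℝ) (a : E d) :
    L a = ∑ i, a i * L (EuclideanSpace.single i 1) := by
  conv_lhs => rw [decomp a]
  simp [map_sum]

lemma euclid_apply {d : ℕ} (a : E d) (i : Fin d) : a i = ⟪a, EuclideanSpace.single i (1:ℝ)⟫ := by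
  simp [EuclideanSpace.inner_single_right]

lemma diffAt_dfd {d : ℕ} {p : E d → ℝ} (hp : ContDiff ℝ 2 p) (w x : E d) :
    DifferentiableAt ℝ (fun y => fderiv ℝ p y w) x := by
  have hd : DifferentiableAt ℝ (fderiv ℝ p) x :=
    ((hp.fderiv_right (m := 1) (by norm_num)).differentiable one_ne_zero).differentiableAt
  exact hd.clm_apply (differentiableAt_const w)

lemma lap_eq {d : ℕ} {p : E d → ℝ} (hp : ContDiff ℝ 2 p) (x : E d) :
    lap p x = ∑ i, fderiv ℝ (fun y => fderiv ℝ p y (EuclideanSpace.single i 1)) x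
      (EuclideanSpace.single i 1) := by
  unfold lap
  exact Finset.sum_congr rfl fun i _ => iter2_eq hp x _

lemma D2_mul {d : ℕ} {p q : E d → ℝ} (hp : ContDiff ℝ 2 p) (hq : ContDiff ℝ 2 q)
    (x w : E d) :
    fderiv ℝ (fun y => fderiv ℝ (fun z => p z * q z) y w) x w
      = p x * fderiv ℝ (fun y => fderiv ℝ q y w) x w
        + 2 * (fderiv ℝ p x w * fderiv ℝ q x w)
        + q x * fderiv ℝ (fun y => fderiv ℝ p y w) x w := by
  have hpd : Differentiable ℝ p := hp.differentiable (by norm_num)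
  have hqd : Differentiable ℝ q := hq.differentiable (by norm_num)
  have h1 : (fun y => fderiv ℝ (fun z => p z * q z) y w)
      = fun y => p y * fderiv ℝ q y w + q y * fderiv ℝ p y w := by
    funext y
    rw [fderiv_fun_mul (hpd y) (hqd y)]
    simp [mul_comm]
  rw [h1]
  rw [fderiv_fun_add (f := fun y => p y * fderiv ℝ q y w) (g := fun y => q y * fderiv ℝ p y w) ((hpd x).mul (diffAt_dfd hq w x)) ((hqd x).mul (diffAt_dfd hp w x))]
  rw [ContinuousLinearMap.add_apply]
  rw [fderiv_fun_mul (hpd x) (diffAt_dfd hq w x), fderiv_fun_mul (hqd x) (diffAt_dfd hp w x)]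
  simp only [ContinuousLinearMap.add_apply, ContinuousLinearMap.smul_apply, smul_eq_mul]
  ring

lemma lap_mul {d : ℕ} {p q : E d → ℝ} (hp : ContDiff ℝ 2 p) (hq : ContDiff ℝ 2 q) (x : E d) :
    lap (fun y => p y * q y) x
      = p x * lap q x
        + 2 * ∑ i, fderiv ℝ p x (EuclideanSpace.single i 1)
            * fderiv ℝ q x (EuclideanSpace.single i 1)
        + q x * lap p x := by
  rw [lap_eq (hp.mul hq) x, lap_eq hp x, lap_eq hq x]
  rw [Finset.mul_sum, Finset.mul_sum, Finset.mul_sum, ← Finset.sum_add_distrib,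
    ← Finset.sum_add_distrib]
  exact Finset.sum_congr rfl fun i _ => D2_mul hp hq x _

lemma fd_exp {d : ℕ} {p : E d → ℝ} (hp : Differentiable ℝ p) (y w : E d) :
    fderiv ℝ (fun z => Real.exp (p z)) y w = Real.exp (p y) * fderiv ℝ p y w := by
  rw [fderiv_exp (hp y)]
  simp

lemma lap_exp {d : ℕ} {p : E d → ℝ} (hp : ContDiff ℝ 2 p) (x : E d) :
    lap (fun y => Real.exp (p y)) x
      = Real.exp (p x) * (lap p x
          + ∑ i, fderiv ℝ p x (EuclideanSpace.single i 1)
              * fderiv ℝ p x (EuclideanSpace.single i 1)) := by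
  have hpd : Differentiable ℝ p := hp.differentiable (by norm_num)
  have hexp : ContDiff ℝ 2 (fun y => Real.exp (p y)) := hp.exp
  rw [lap_eq hexp x, lap_eq hp x]
  have key : ∀ i : Fin d,
      fderiv ℝ (fun y => fderiv ℝ (fun z => Real.exp (p z)) y (EuclideanSpace.single i 1)) x
        (EuclideanSpace.single i 1)
      = Real.exp (p x) * (fderiv ℝ (fun y => fderiv ℝ p y (EuclideanSpace.single i 1)) x
          (EuclideanSpace.single i 1)
        + fderiv ℝ p x (EuclideanSpace.single i 1) * fderiv ℝ p x (EuclideanSpace.single i 1)) := by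
    intro i
    set w := EuclideanSpace.single i (1:ℝ)
    have h1 : (fun y => fderiv ℝ (fun z => Real.exp (p z)) y w)
        = fun y => Real.exp (p y) * fderiv ℝ p y w := funext fun y => fd_exp hpd y w
    rw [h1, fderiv_fun_mul ((hpd x).exp)
      (diffAt_dfd hp w x)]
    simp only [ContinuousLinearMap.add_apply, ContinuousLinearMap.smul_apply, smul_eq_mul]
    rw [fd_exp hpd x w]
    ring
  rw [Finset.sum_congr rfl fun i _ => key i, ← Finset.mul_sum, Finset.sum_add_distrib]

lemma lap_eq' {d : ℕ} (p : E d → ℝ) (x : E d) :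
    lap p x = ∑ i, fderiv ℝ (fderiv ℝ p) x (EuclideanSpace.single i 1)
      (EuclideanSpace.single i 1) := by
  unfold lap
  refine Finset.sum_congr rfl fun i _ => ?_
  rw [iteratedFDeriv_two_apply]
  simp

lemma dvg_smul {d : ℕ} {g : E d → ℝ} {v : E d → E d} {x : E d}
    (hg : DifferentiableAt ℝ g x) (hv : DifferentiableAt ℝ v x) :
    dvg (fun y => g y • v y) x = fderiv ℝ g x (v x) + g x * dvg v x := by
  unfold dvg
  have h : ∀ i : Fin d,
      ⟪fderiv ℝ (fun y => g y • v y) x (EuclideanSpace.single i 1),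
        EuclideanSpace.single i (1:ℝ)⟫
      = fderiv ℝ g x (EuclideanSpace.single i 1) * (v x) i
        + g x * ⟪fderiv ℝ v x (EuclideanSpace.single i 1), EuclideanSpace.single i (1:ℝ)⟫ := by
    intro i
    rw [fderiv_fun_smul hg hv]
    simp only [ContinuousLinearMap.add_apply, ContinuousLinearMap.coe_smul',
      Pi.smul_apply, ContinuousLinearMap.smulRight_apply]
    rw [inner_add_left, real_inner_smul_left, real_inner_smul_left]
    simp only [← euclid_apply]
    ring
  rw [Finset.sum_congr rfl fun i _ => h i, Finset.sum_add_distrib, ← Finset.mul_sum]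
  rw [clm_decomp (fderiv ℝ g x) (v x)]
  congr 1
  exact Finset.sum_congr rfl fun i _ => mul_comm _ _

lemma dvg_sub {d : ℕ} {v w : E d → E d} {x : E d}
    (hv : DifferentiableAt ℝ v x) (hw : DifferentiableAt ℝ w x) :
    dvg (fun y => v y - w y) x = dvg v x - dvg w x := by
  unfold dvg
  rw [← Finset.sum_sub_distrib]
  refine Finset.sum_congr rfl fun i _ => ?_
  rw [fderiv_fun_sub hv hw]
  simp [inner_sub_left]

lemma dvg_const_smul {d : ℕ} {v : E d → E d} {x : E d} (c : ℝ)
    (hv : DifferentiableAt ℝ v x) :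
    dvg (fun y => c • v y) x = c * dvg v x := by
  unfold dvg
  rw [Finset.mul_sum]
  refine Finset.sum_congr rfl fun i _ => ?_
  rw [fderiv_fun_const_smul hv c]
  simp [real_inner_smul_left]

lemma grad_expand {d : ℕ} (p : E d → ℝ) (y : E d) :
    gradient p y = ∑ i, fderiv ℝ p y (EuclideanSpace.single i 1) • EuclideanSpace.single i (1:ℝ) := by
  conv_lhs => rw [decomp (gradient p y)]
  refine Finset.sum_congr rfl fun i _ => ?_
  rw [euclid_apply (gradient p y) i, inner_grad]

lemma dvg_grad {d : ℕ} {p : E d → ℝ} (hp : ContDiff ℝ 2 p) (x : E d) :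
    dvg (fun y => gradient p y) x = lap p x := by
  have h1 : (fun y => gradient p y)
      = fun y => ∑ i, fderiv ℝ p y (EuclideanSpace.single i 1) • EuclideanSpace.single i (1:ℝ) :=
    funext fun y => grad_expand p y
  rw [lap_eq hp x]
  unfold dvg
  refine Finset.sum_congr rfl fun j _ => ?_
  rw [h1, fderiv_fun_sum (fun i _ => (diffAt_dfd hp _ x).smul_const _)]
  rw [ContinuousLinearMap.sum_apply, sum_inner]
  have h2 : ∀ i : Fin d, ⟪fderiv ℝ (fun y => fderiv ℝ p y (EuclideanSpace.single i 1)
        • EuclideanSpace.single i (1:ℝ)) x (EuclideanSpace.single j 1),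
        EuclideanSpace.single j (1:ℝ)⟫
      = (if i = j then fderiv ℝ (fun y => fderiv ℝ p y (EuclideanSpace.single i 1)) x
          (EuclideanSpace.single j 1) else 0) := by
    intro i
    rw [fderiv_smul_const (diffAt_dfd hp _ x), ContinuousLinearMap.smulRight_apply,
      real_inner_smul_left]
    rw [EuclideanSpace.inner_single_left]
    simp only [EuclideanSpace.single_apply, map_one, one_mul]
    split_ifs <;> simp
  rw [Finset.sum_congr rfl fun i _ => h2 i, Finset.sum_ite_eq' Finset.univ j _]
  simp

lemma diffAt_grad {d : ℕ} {p : E d → ℝ} (hp : ContDiff ℝ 2 p) (x : E d) :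
    DifferentiableAt ℝ (fun y => gradient p y) x := by
  have h1 : (fun y => gradient p y)
      = fun y => ∑ i, fderiv ℝ p y (EuclideanSpace.single i 1) • EuclideanSpace.single i (1:ℝ) :=
    funext fun y => grad_expand p y
  rw [h1]
  exact DifferentiableAt.fun_sum fun i _ => (diffAt_dfd hp _ x).smul_const _

theorem stmt5 {d : ℕ} (σ : ℝ) (u ρ : ℝ → E d → ℝ) (f : ℝ → E d → E d) (F : ℝ → E d → ℝ)
    (hu2 : ∀ t, ContDiff ℝ 2 (u t)) (hρ2 : ∀ t, ContDiff ℝ 2 (ρ t))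
    (hut : ∀ (x : E d) (t : ℝ), DifferentiableAt ℝ (fun s => u s x) t)
    (hρt : ∀ (x : E d) (t : ℝ), DifferentiableAt ℝ (fun s => ρ s x) t)
    (hf : ∀ t, ContDiff ℝ 1 (f t))
    (hHJB : ∀ (t : ℝ) (x : E d),
      -(deriv (fun s => u s x) t) + (1/2) * ‖σ • gradient (u t) x‖ ^ 2
        - ⟪gradient (u t) x, f t x⟫ - (σ ^ 2 / 2) * lap (u t) x = F t x)
    (hFP : ∀ (t : ℝ) (x : E d),
      deriv (fun s => ρ s x) t
        - dvg (fun y => ρ t y • (σ ^ 2 • gradient (u t) y - f t y)) x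
        - (σ ^ 2 / 2) * lap (ρ t) x = 0) :
    ∀ (t : ℝ) (x : E d),
      deriv (fun s => ρ s x * Real.exp (u s x)) t
        = -(dvg (fun y => (ρ t y * Real.exp (u t y)) • f t y) x)
          + (σ ^ 2 / 2) * lap (fun y => ρ t y * Real.exp (u t y)) x
          - F t x * (ρ t x * Real.exp (u t x)) := by
  intro t x
  have hu2t := hu2 t
  have hρ2t := hρ2 t
  have hud : Differentiable ℝ (u t) := hu2t.differentiable (by norm_num)
  have hρd : Differentiable ℝ (ρ t) := hρ2t.differentiable (by norm_num)
  have hfd : DifferentiableAt ℝ (f t) x := ((hf t).differentiable one_ne_zero).differentiableAt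
  set e := Real.exp (u t x) with he
  set r := ρ t x with hr
  set rt := deriv (fun s => ρ s x) t with hrt
  set ut := deriv (fun s => u s x) t with hut'
  set S1 := ∑ i, fderiv ℝ (ρ t) x (EuclideanSpace.single i 1)
      * fderiv ℝ (u t) x (EuclideanSpace.single i 1) with hS1
  set S2 := ∑ i, fderiv ℝ (u t) x (EuclideanSpace.single i 1)
      * fderiv ℝ (u t) x (EuclideanSpace.single i 1) with hS2
  -- time derivative
  have h1 : deriv (fun s => ρ s x * Real.exp (u s x)) t = rt * e + r * (e * ut) := by
    exact ((hρt x t).hasDerivAt.mul ((hut x t).hasDerivAt.exp)).deriv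
  -- coordinates of gradient
  have hgcoord : ∀ (p : E d → ℝ) (i : Fin d),
      gradient p x i = fderiv ℝ p x (EuclideanSpace.single i 1) := by
    intro p i
    rw [euclid_apply (gradient p x) i, inner_grad]
  -- fderiv ρ applied to gradient u
  have hDρg : fderiv ℝ (ρ t) x (gradient (u t) x) = S1 := by
    rw [clm_decomp (fderiv ℝ (ρ t) x) (gradient (u t) x), hS1]
    exact Finset.sum_congr rfl fun i _ => by rw [hgcoord]; ring
  have hDug : fderiv ℝ (u t) x (gradient (u t) x) = S2 := by
    rw [clm_decomp (fderiv ℝ (u t) x) (gradient (u t) x), hS2]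
    exact Finset.sum_congr rfl fun i _ => by rw [hgcoord]
  -- HJB rearranged
  have hg2 : ‖gradient (u t) x‖ ^ 2 = S2 := by
    rw [← real_inner_self_eq_norm_sq, inner_grad, hDug]
  have hnorm : ‖σ • gradient (u t) x‖ ^ 2 = σ ^ 2 * S2 := by
    rw [norm_smul, mul_pow, hg2]
    simp [Real.norm_eq_abs, sq_abs]
  have hHJB' : ut = (1/2) * (σ^2 * S2) - fderiv ℝ (u t) x (f t x)
      - (σ^2/2) * lap (u t) x - F t x := by
    have := hHJB t x
    rw [hnorm, inner_grad] at this
    linarith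
  -- FP rearranged
  have hV : DifferentiableAt ℝ (fun y => σ ^ 2 • gradient (u t) y - f t y) x :=
    ((diffAt_grad hu2t x).const_smul (σ^2)).sub hfd
  have hdvgV : dvg (fun y => σ ^ 2 • gradient (u t) y - f t y) x
      = σ^2 * lap (u t) x - dvg (f t) x := by
    rw [dvg_sub (v := fun y => σ ^ 2 • gradient (u t) y) ((diffAt_grad hu2t x).const_smul (σ^2)) hfd,
      dvg_const_smul (σ^2) (diffAt_grad hu2t x), dvg_grad hu2t x]
  have hFP' : rt = σ^2 * S1 - fderiv ℝ (ρ t) x (f t x)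
      + r * (σ^2 * lap (u t) x - dvg (f t) x) + (σ^2/2) * lap (ρ t) x := by
    have h0 := hFP t x
    rw [dvg_smul (hρd x) hV, hdvgV] at h0
    have h2 : fderiv ℝ (ρ t) x (σ ^ 2 • gradient (u t) x - f t x)
        = σ^2 * S1 - fderiv ℝ (ρ t) x (f t x) := by
      rw [map_sub, ContinuousLinearMap.map_smul, hDρg, smul_eq_mul]
    rw [h2] at h0
    linarith
  -- Ψ derivative applied
  have hΨd : DifferentiableAt ℝ (fun y => ρ t y * Real.exp (u t y)) x :=
    (hρd x).mul ((hud x).exp)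
  have hΨfd : ∀ a : E d, fderiv ℝ (fun y => ρ t y * Real.exp (u t y)) x a
      = e * fderiv ℝ (ρ t) x a + r * (e * fderiv ℝ (u t) x a) := by
    intro a
    rw [fderiv_fun_mul (hρd x) ((hud x).exp)]
    simp only [ContinuousLinearMap.add_apply, ContinuousLinearMap.smul_apply, smul_eq_mul]
    rw [fd_exp hud x a]
    ring
  -- dvg of Ψ f
  have hdvgΨf : dvg (fun y => (ρ t y * Real.exp (u t y)) • f t y) x
      = e * fderiv ℝ (ρ t) x (f t x) + r * (e * fderiv ℝ (u t) x (f t x))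
        + (r * e) * dvg (f t) x := by
    rw [dvg_smul hΨd hfd, hΨfd]
  -- lap of Ψ
  have hsum : ∑ i, fderiv ℝ (ρ t) x (EuclideanSpace.single i 1)
      * fderiv ℝ (fun y => Real.exp (u t y)) x (EuclideanSpace.single i 1) = e * S1 := by
    rw [hS1, Finset.mul_sum]
    refine Finset.sum_congr rfl fun i _ => ?_
    rw [fd_exp hud x _]
    ring
  have hlapΨ : lap (fun y => ρ t y * Real.exp (u t y)) x
      = r * (e * (lap (u t) x + S2)) + 2 * (e * S1) + e * lap (ρ t) x := by
    rw [lap_mul hρ2t (hu2t.exp) x, lap_exp hu2t x, hsum, ← hS2]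
  rw [h1, hdvgΨf, hlapΨ, hHJB', hFP']
  ring
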